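/- Fix s0, v0, s_f, v_f ∈ ℝ and let 𝒜₀₀ := {u ∈ L²([0,1];ℝ) : s0 + v0 + ∫_0^1 (1−τ)·u(τ) dτ = s_f and v0 + ∫_0^1 u(τ) dτ = v_f}. For u⁻ ∈ L²([0,1];ℝ), define c1 := 12·( s0 + v0 − s_f + ∫_0^1 (1−τ)u⁻(τ)dτ ) − 6·( v0 − v_f + ∫_0^1 u⁻(τ)dτ ) and c2 := −6·( s0 + v0 − s_f + ∫_0^1 (1−τ)u⁻(τ)dτ ) + 2·( v0 − v_f + ∫_0^1 u⁻(τ)dτ ). Then the function P(t) := u⁻(t) + c1·t + c2 is the metric projection of u⁻ onto 𝒜₀₀: P ∈ 𝒜₀₀ and ‖u⁻ − P‖_{L²} ≤ ‖u⁻ − y‖_{L²} for every y ∈ 𝒜₀₀. -/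

import Mathlib

open MeasureTheory

/-- Projection onto the affine set `𝒜₀₀` of controls steering the double integrator
from `(s0, v0)` at time `0` to `(sf, vf)` at time `1`:
`P(t) = u⁻(t) + c1 t + c2` with the stated constants `c1, c2` is the metric projection
of `u⁻` onto `𝒜₀₀`. -/
theorem projection_onto_affine_set_double_integrator
    (s0 v0 sf vf : ℝ)
    (u : ℝ → ℝ)
    (hu : MemLp u 2 (volume.restrict (Set.Icc (0:ℝ) 1)))
    (c1 c2 : ℝ)
    (hc1 : c1 = 12 * (s0 + v0 - sf + ∫ τ in (0:ℝ)..1, (1 - τ) * u τ)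
      - 6 * (v0 - vf + ∫ τ in (0:ℝ)..1, u τ))
    (hc2 : c2 = -6 * (s0 + v0 - sf + ∫ τ in (0:ℝ)..1, (1 - τ) * u τ)
      + 2 * (v0 - vf + ∫ τ in (0:ℝ)..1, u τ))
    (P : ℝ → ℝ) (hP : ∀ t, P t = u t + c1 * t + c2) :
    (MemLp P 2 (volume.restrict (Set.Icc (0:ℝ) 1)) ∧
      s0 + v0 + (∫ τ in (0:ℝ)..1, (1 - τ) * P τ) = sf ∧
      v0 + (∫ τ in (0:ℝ)..1, P τ) = vf) ∧
    ∀ y : ℝ → ℝ,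
      MemLp y 2 (volume.restrict (Set.Icc (0:ℝ) 1)) →
      s0 + v0 + (∫ τ in (0:ℝ)..1, (1 - τ) * y τ) = sf →
      v0 + (∫ τ in (0:ℝ)..1, y τ) = vf →
      (∫ t in (0:ℝ)..1, (u t - P t) ^ 2) ≤ ∫ t in (0:ℝ)..1, (u t - y t) ^ 2 := by
  have h01 : (0:ℝ) ≤ 1 := zero_le_one
  haveI hFin : IsFiniteMeasure (volume.restrict (Set.Icc (0:ℝ) 1)) :=
    ⟨by simp [Real.volume_Icc]⟩
  -- pointwise bound for affine functions on [0,1]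
  have hbnd : ∀ (a b t : ℝ), t ∈ Set.Icc (0:ℝ) 1 → ‖a * t + b‖ ≤ |a| + |b| := by
    intro a b t ht
    have ht1 : |t| ≤ 1 := abs_le.2 ⟨by linarith [ht.1], ht.2⟩
    calc ‖a * t + b‖ ≤ |a * t| + |b| := abs_add_le _ _
      _ = |a| * |t| + |b| := by rw [abs_mul]
      _ ≤ |a| * 1 + |b| := by gcongr
      _ = |a| + |b| := by ring
  have hpolymem : ∀ a b : ℝ, MemLp (fun t => a * t + b) 2 (volume.restrict (Set.Icc (0:ℝ) 1)) := by
    intro a b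
    refine MemLp.of_bound
      ((continuous_const.mul continuous_id |>.add continuous_const).aestronglyMeasurable)
      (|a| + |b|) ?_
    filter_upwards [ae_restrict_mem measurableSet_Icc] with t ht
    exact hbnd a b t ht
  -- interval integrability from MemLp
  have hII : ∀ f : ℝ → ℝ, MemLp f 2 (volume.restrict (Set.Icc (0:ℝ) 1)) →
      IntervalIntegrable f volume 0 1 := by
    intro f hf
    rw [intervalIntegrable_iff_integrableOn_Ioc_of_le h01]
    exact IntegrableOn.mono_set (hf.integrable one_le_two) Set.Ioc_subset_Icc_self
  have hIIsq : ∀ f : ℝ → ℝ, MemLp f 2 (volume.restrict (Set.Icc (0:ℝ) 1)) →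
      IntervalIntegrable (fun t => f t ^ 2) volume 0 1 := by
    intro f hf
    rw [intervalIntegrable_iff_integrableOn_Ioc_of_le h01]
    exact IntegrableOn.mono_set hf.integrable_sq Set.Ioc_subset_Icc_self
  have hIImul : ∀ (a b : ℝ) (f : ℝ → ℝ), MemLp f 2 (volume.restrict (Set.Icc (0:ℝ) 1)) →
      IntervalIntegrable (fun t => (a * t + b) * f t) volume 0 1 := by
    intro a b f hf
    rw [intervalIntegrable_iff_integrableOn_Ioc_of_le h01]
    refine IntegrableOn.mono_set ?_ Set.Ioc_subset_Icc_self
    refine Integrable.bdd_mul (c := |a| + |b|) (hf.integrable one_le_two)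
      ((continuous_const.mul continuous_id |>.add continuous_const).aestronglyMeasurable) ?_
    filter_upwards [ae_restrict_mem measurableSet_Icc] with t ht
    exact hbnd a b t ht
  have hIIone : ∀ (a b : ℝ) (f : ℝ → ℝ), MemLp f 2 (volume.restrict (Set.Icc (0:ℝ) 1)) →
      IntervalIntegrable (fun t => (a - b * t) * f t) volume 0 1 := by
    intro a b f hf
    have he : (fun t : ℝ => (a - b * t) * f t) = fun t => ((-b) * t + a) * f t :=
      funext fun t => by ring
    rw [he]; exact hIImul _ _ f hf
  -- continuous integrands are interval integrable
  have hcII : ∀ r s : ℝ, IntervalIntegrable (fun t : ℝ => r * t ^ 2 + (s * t ^ 1 + c2)) volume 0 1 :=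
    fun r s => Continuous.intervalIntegrable (by fun_prop) 0 1
  -- MemLp of P
  have hPfun : P = fun t => u t + (c1 * t + c2) := funext fun t => by rw [hP t]; ring
  have hP2 : MemLp P 2 (volume.restrict (Set.Icc (0:ℝ) 1)) := by
    rw [hPfun]; exact hu.add (hpolymem c1 c2)
  -- polynomial integrals
  have hIa : IntervalIntegrable (fun τ : ℝ => (-c1) * τ ^ 2) volume 0 1 :=
    Continuous.intervalIntegrable (by fun_prop) 0 1
  have hIb : IntervalIntegrable (fun τ : ℝ => (c1 - c2) * τ ^ 1) volume 0 1 :=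
    Continuous.intervalIntegrable (by fun_prop) 0 1
  have hIc : IntervalIntegrable (fun _ : ℝ => c2) volume 0 1 :=
    intervalIntegrable_const
  have hId : IntervalIntegrable (fun τ : ℝ => c1 * τ ^ 1) volume 0 1 :=
    Continuous.intervalIntegrable (by fun_prop) 0 1
  have hIe : IntervalIntegrable (fun τ : ℝ => (1 - τ) * (c1 * τ + c2)) volume 0 1 :=
    Continuous.intervalIntegrable (by fun_prop) 0 1
  have hIf : IntervalIntegrable (fun τ : ℝ => c1 * τ + c2) volume 0 1 :=
    Continuous.intervalIntegrable (by fun_prop) 0 1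
  have hpint1 : (∫ τ in (0:ℝ)..1, (1 - τ) * (c1 * τ + c2)) = c1 / 6 + c2 / 2 := by
    have he : (fun τ : ℝ => (1 - τ) * (c1 * τ + c2))
        = fun τ => (-c1) * τ ^ 2 + ((c1 - c2) * τ ^ 1 + c2) := funext fun τ => by ring
    rw [he, intervalIntegral.integral_add hIa (hIb.add hIc),
      intervalIntegral.integral_add hIb hIc,
      intervalIntegral.integral_const_mul, intervalIntegral.integral_const_mul,
      integral_pow, integral_pow, intervalIntegral.integral_const]
    norm_num
    ring
  have hpint2 : (∫ τ in (0:ℝ)..1, (c1 * τ + c2)) = c1 / 2 + c2 := by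
    have he : (fun τ : ℝ => c1 * τ + c2) = fun τ => c1 * τ ^ 1 + c2 := funext fun τ => by ring
    rw [he, intervalIntegral.integral_add hId hIc,
      intervalIntegral.integral_const_mul, integral_pow, intervalIntegral.integral_const]
    norm_num
    ring
  -- integrabilities of the u-pieces
  have hIIu : IntervalIntegrable u volume 0 1 := hII u hu
  have hII1u : IntervalIntegrable (fun τ => (1 - τ) * u τ) volume 0 1 := by
    have he : (fun τ : ℝ => (1 - τ) * u τ) = fun τ => (1 - 1 * τ) * u τ :=
      funext fun τ => by ring
    rw [he]; exact hIIone 1 1 u hu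
  -- composite integrals of P
  have hPint1 : (∫ τ in (0:ℝ)..1, (1 - τ) * P τ)
      = (∫ τ in (0:ℝ)..1, (1 - τ) * u τ) + (c1 / 6 + c2 / 2) := by
    have he : (fun τ : ℝ => (1 - τ) * P τ)
        = fun τ => (1 - τ) * u τ + (1 - τ) * (c1 * τ + c2) := funext fun τ => by rw [hP τ]; ring
    rw [he, intervalIntegral.integral_add hII1u hIe, hpint1]
  have hPint2 : (∫ τ in (0:ℝ)..1, P τ)
      = (∫ τ in (0:ℝ)..1, u τ) + (c1 / 2 + c2) := by
    rw [hPfun, intervalIntegral.integral_add hIIu hIf, hpint2]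
  have hPc1 : s0 + v0 + (∫ τ in (0:ℝ)..1, (1 - τ) * P τ) = sf := by
    rw [hPint1, hc1, hc2]; ring
  have hPc2 : v0 + (∫ τ in (0:ℝ)..1, P τ) = vf := by
    rw [hPint2, hc1, hc2]; ring
  refine ⟨⟨hP2, hPc1, hPc2⟩, ?_⟩
  -- optimality
  intro y hy hy1 hy2
  have hw2 : MemLp (fun t => P t - y t) 2 (volume.restrict (Set.Icc (0:ℝ) 1)) := hP2.sub hy
  have hIIw : IntervalIntegrable (fun t => P t - y t) volume 0 1 := hII _ hw2
  have hIIP : IntervalIntegrable P volume 0 1 := hII P hP2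
  have hIIy : IntervalIntegrable y volume 0 1 := hII y hy
  have hII1w : IntervalIntegrable (fun t => (1 - t) * (P t - y t)) volume 0 1 := by
    have he : (fun t : ℝ => (1 - t) * (P t - y t)) = fun t => (1 - 1 * t) * (P t - y t) :=
      funext fun t => by ring
    rw [he]; exact hIIone 1 1 _ hw2
  have hIItw : IntervalIntegrable (fun t => t * (P t - y t)) volume 0 1 := by
    have he : (fun t : ℝ => t * (P t - y t)) = fun t => (1 * t + 0) * (P t - y t) :=
      funext fun t => by ring
    rw [he]; exact hIImul 1 0 _ hw2
  -- ∫ w = 0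
  have hintw : (∫ t in (0:ℝ)..1, (P t - y t)) = 0 := by
    rw [intervalIntegral.integral_sub hIIP hIIy]
    have h1 : (∫ τ in (0:ℝ)..1, P τ) = vf - v0 := by linarith
    have h2 : (∫ τ in (0:ℝ)..1, y τ) = vf - v0 := by linarith
    rw [h1, h2]; ring
  -- ∫ (1-t) w = 0
  have hint1w : (∫ t in (0:ℝ)..1, (1 - t) * (P t - y t)) = 0 := by
    have he : (fun t : ℝ => (1 - t) * (P t - y t))
        = fun t => (1 - t) * P t - (1 - t) * y t := funext fun t => by ring
    have hII1P : IntervalIntegrable (fun τ => (1 - τ) * P τ) volume 0 1 := by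
      have he2 : (fun τ : ℝ => (1 - τ) * P τ) = fun τ => (1 - 1 * τ) * P τ :=
        funext fun τ => by ring
      rw [he2]; exact hIIone 1 1 P hP2
    have hII1y : IntervalIntegrable (fun τ => (1 - τ) * y τ) volume 0 1 := by
      have he2 : (fun τ : ℝ => (1 - τ) * y τ) = fun τ => (1 - 1 * τ) * y τ :=
        funext fun τ => by ring
      rw [he2]; exact hIIone 1 1 y hy
    rw [he, intervalIntegral.integral_sub hII1P hII1y]
    have h1 : (∫ τ in (0:ℝ)..1, (1 - τ) * P τ) = sf - s0 - v0 := by linarith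
    have h2 : (∫ τ in (0:ℝ)..1, (1 - τ) * y τ) = sf - s0 - v0 := by linarith
    rw [h1, h2]; ring
  -- ∫ t w = 0
  have hinttw : (∫ t in (0:ℝ)..1, t * (P t - y t)) = 0 := by
    have he : (fun t : ℝ => t * (P t - y t))
        = fun t => (P t - y t) - (1 - t) * (P t - y t) := funext fun t => by ring
    rw [he, intervalIntegral.integral_sub hIIw hII1w, hintw, hint1w]; ring
  -- expansion
  have hexp : (fun t : ℝ => (u t - y t) ^ 2)
      = fun t => (u t - P t) ^ 2 +
        ((-(2 * c1)) * (t * (P t - y t)) + ((-(2 * c2)) * (P t - y t) + (P t - y t) ^ 2)) :=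
    funext fun t => by rw [hP t]; ring
  have hIIupsq : IntervalIntegrable (fun t => (u t - P t) ^ 2) volume 0 1 := by
    have he : (fun t : ℝ => (u t - P t) ^ 2) = fun t => (c1 * t + c2) ^ 2 :=
      funext fun t => by rw [hP t]; ring
    rw [he]; exact Continuous.intervalIntegrable (by fun_prop) 0 1
  have hIIwsq : IntervalIntegrable (fun t => (P t - y t) ^ 2) volume 0 1 := hIIsq _ hw2
  rw [hexp, intervalIntegral.integral_add hIIupsq
      ((hIItw.const_mul _).add ((hIIw.const_mul _).add hIIwsq)),
    intervalIntegral.integral_add (hIItw.const_mul _) ((hIIw.const_mul _).add hIIwsq),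
    intervalIntegral.integral_add (hIIw.const_mul _) hIIwsq,
    intervalIntegral.integral_const_mul, intervalIntegral.integral_const_mul,
    hinttw, hintw]
  have hnn : 0 ≤ ∫ t in (0:ℝ)..1, (P t - y t) ^ 2 :=
    intervalIntegral.integral_nonneg h01 (fun t _ => sq_nonneg _)
  linarith
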